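/- In the free group F₂ = ⟨a, b⟩, for any nonzero integers k and n, the element w = aᵏbⁿ is not a proper power; that is, if w = uᵐ for some u ∈ F₂ and integer m ≥ 1, then m = 1. -/

import Mathlib

open Complex Finset

namespace Stmt5Aux

noncomputable section

/-- The affine group of `ℂ`: pairs `(α, β)` with `α ≠ 0`, acting as `z ↦ α z + β`. -/
def Aff : Type := {p : ℂ × ℂ // p.1 ≠ 0}

instance : Mul Aff :=
  ⟨fun x y => ⟨(x.1.1 * y.1.1, x.1.1 * y.1.2 + x.1.2), mul_ne_zero x.2 y.2⟩⟩
instance : One Aff := ⟨⟨(1, 0), one_ne_zero⟩⟩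
instance : Inv Aff :=
  ⟨fun x => ⟨(x.1.1⁻¹, -(x.1.2 * x.1.1⁻¹)), inv_ne_zero x.2⟩⟩

lemma mul_def (x y : Aff) :
    x * y = ⟨(x.1.1 * y.1.1, x.1.1 * y.1.2 + x.1.2), mul_ne_zero x.2 y.2⟩ := rfl
lemma one_def : (1 : Aff) = ⟨(1, 0), one_ne_zero⟩ := rfl
lemma inv_def (x : Aff) :
    x⁻¹ = ⟨(x.1.1⁻¹, -(x.1.2 * x.1.1⁻¹)), inv_ne_zero x.2⟩ := rfl

instance : Group Aff where
  mul_assoc x y z := by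
    apply Subtype.ext
    rw [mul_def, mul_def, mul_def, mul_def]
    exact Prod.ext (mul_assoc _ _ _) (by ring)
  one_mul x := by
    apply Subtype.ext
    erw [mul_def]; simp only [one_def]
    exact Prod.ext (one_mul _) (by ring)
  mul_one x := by
    apply Subtype.ext
    erw [mul_def]; simp only [one_def]
    exact Prod.ext (mul_one _) (by ring)
  inv_mul_cancel x := by
    apply Subtype.ext
    erw [mul_def]; simp only [inv_def, one_def]
    refine Prod.ext (inv_mul_cancel₀ x.2) ?_
    simp only
    field_simp
    ring

/-- First-component projection as a monoid hom to `ℂˣ`. -/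
def π : Aff →* ℂˣ where
  toFun x := Units.mk0 x.1.1 x.2
  map_one' := by ext; rfl
  map_mul' x y := by ext; rfl

/-- Diagonal embedding `ℂˣ →* Aff`. -/
def ι : ℂˣ →* Aff where
  toFun α := ⟨((α : ℂ), 0), α.ne_zero⟩
  map_one' := by apply Subtype.ext; simp [one_def]
  map_mul' x y := by
    apply Subtype.ext
    erw [mul_def]; simp

/-- Translation embedding `Multiplicative ℂ →* Aff`. -/
def τ : Multiplicative ℂ →* Aff where
  toFun β := ⟨(1, Multiplicative.toAdd β), one_ne_zero⟩
  map_one' := by apply Subtype.ext; simp [one_def]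
  map_mul' x y := by
    apply Subtype.ext
    erw [mul_def]; simp
    ring

lemma aff_pow (x : Aff) (m : ℕ) :
    (x ^ m).1 = (x.1.1 ^ m, x.1.2 * ∑ j ∈ range m, x.1.1 ^ j) := by
  induction m with
  | zero => simp [pow_zero, one_def]
  | succ m ih =>
      rw [pow_succ', mul_def]
      refine Prod.ext ?_ ?_
      · simp [ih, pow_succ']
      · simp only [ih, geom_sum_succ]
        ring

end

end Stmt5Aux

open Stmt5Aux in
/-- In `F₂ = ⟨a,b⟩`, for nonzero integers `k, n`, the element `a^k b^n` is
not a proper power: if `a^k b^n = u^m` with `m ≥ 1` then `m = 1`. -/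
theorem stmt5 (k n : ℤ) (hk : k ≠ 0) (hn : n ≠ 0)
    (a b : FreeGroup (Fin 2)) (ha : a = FreeGroup.of 0) (hb : b = FreeGroup.of 1)
    (u : FreeGroup (Fin 2)) (m : ℕ) (hm : 1 ≤ m)
    (h : a ^ k * b ^ n = u ^ m) : m = 1 := by
  classical
  -- the root of unity
  set ζ : ℂ := Complex.exp (2 * Real.pi * Complex.I / k) with hζdef
  have hζ0 : ζ ≠ 0 := Complex.exp_ne_zero _
  have hζk : ζ ^ (k : ℤ) = 1 := by
    rw [hζdef, ← Complex.exp_int_mul]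
    rw [mul_div_cancel₀ _ (by exact_mod_cast hk : (k : ℂ) ≠ 0)]
    simpa using Complex.exp_two_pi_mul_I
  set ζu : ℂˣ := Units.mk0 ζ hζ0 with hζu
  -- the homomorphism to the affine group
  set φ : FreeGroup (Fin 2) →* Aff :=
    FreeGroup.lift (fun i => if i = 0 then ι ζu else τ (Multiplicative.ofAdd 1)) with hφ
  have hφa : φ a = ι ζu := by rw [ha, hφ]; simp
  have hφb : φ b = τ (Multiplicative.ofAdd 1) := by rw [hb, hφ]; simp
  -- the a-exponent homomorphism
  set E : FreeGroup (Fin 2) →* Multiplicative ℤ :=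
    FreeGroup.lift (fun i => if i = 0 then Multiplicative.ofAdd (1 : ℤ) else 1) with hE
  have hEa : E a = Multiplicative.ofAdd (1 : ℤ) := by rw [ha, hE]; simp
  have hEb : E b = 1 := by rw [hb, hE]; simp
  set e : ℤ := Multiplicative.toAdd (E u) with he
  -- k = m * e
  have hk_me : k = (m : ℤ) * e := by
    have := congrArg E h
    rw [map_mul, map_zpow, map_zpow, map_pow, hEa, hEb, one_zpow, mul_one] at this
    have := congrArg Multiplicative.toAdd this
    simpa [toAdd_zpow, toAdd_pow, he, mul_comm] using this
  -- π ∘ φ = zpowersHom ∘ E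
  have hπφ : π.comp φ = (zpowersHom ℂˣ ζu).comp E := by
    apply FreeGroup.ext_hom
    intro i
    fin_cases i
    · rw [hφ, hE]
      simp [π, ι, zpowersHom_apply]
      exact Units.ext rfl
    · rw [hφ, hE]
      simp only [MonoidHom.comp_apply, FreeGroup.lift_apply_of, if_neg (by decide : ¬(1 : Fin 2) = 0)]
      simp [π, τ, zpowersHom_apply]
      exact Units.ext rfl
  -- extract α, β from φ u
  obtain ⟨α, β, hα, hQ⟩ : ∃ (α β : ℂ) (hα : α ≠ 0), φ u = ⟨(α, β), hα⟩ :=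
    ⟨(φ u).1.1, (φ u).1.2, (φ u).2, Subtype.ext rfl⟩
  -- α = ζ ^ e
  have hαe : α = ζ ^ e := by
    have h1 : π (φ u) = ζu ^ e := by
      have := congrFun (congrArg DFunLike.coe hπφ) u
      simp only [MonoidHom.comp_apply, zpowersHom_apply, ← he] at this
      exact this
    rw [hQ] at h1
    have h2 := congrArg Units.val h1
    simpa [π, hζu] using h2
  -- apply φ to the main equation
  have hφh := congrArg φ h
  rw [map_mul, map_zpow, map_zpow, map_pow, hφa, hφb, hQ] at hφh
  have hζuk : ζu ^ (k : ℤ) = 1 := Units.ext (by simpa [hζu] using hζk)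
  rw [← map_zpow, ← map_zpow, hζuk, map_one, one_mul] at hφh
  have hofn : (Multiplicative.ofAdd (1 : ℂ)) ^ (n : ℤ) = Multiplicative.ofAdd (n : ℂ) := by
    apply Multiplicative.toAdd.injective
    simp [toAdd_zpow]
  rw [hofn] at hφh
  -- extract component equations
  have hval := congrArg Subtype.val hφh
  erw [aff_pow] at hval
  have hc1 : (1 : ℂ) = α ^ m := by
    have := congrArg Prod.fst hval
    exact this
  have hc2 : (n : ℂ) = β * ∑ j ∈ range m, α ^ j := by
    have := congrArg Prod.snd hval
    exact this
  -- geometric series forces α = 1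
  have hα1 : α = 1 := by
    have hg : (n : ℂ) * (α - 1) = β * (α ^ m - 1) := by
      rw [hc2, mul_assoc, geom_sum_mul]
    rw [← hc1, sub_self, mul_zero] at hg
    have hn' : (n : ℂ) ≠ 0 := by exact_mod_cast hn
    have := mul_eq_zero.mp hg
    rcases this with h' | h'
    · exact absurd h' hn'
    · exact sub_eq_zero.mp h'
  -- hence ζ ^ e = 1, so k ∣ e
  have hζe : ζ ^ e = 1 := by rw [← hαe, hα1]
  obtain ⟨t, ht⟩ : ∃ t : ℤ, (e : ℂ) * (2 * Real.pi * Complex.I / k) = t * (2 * Real.pi * Complex.I) := by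
    rw [hζdef, ← Complex.exp_int_mul] at hζe
    exact Complex.exp_eq_one_iff.mp hζe
  have h2pi : (2 * Real.pi * Complex.I : ℂ) ≠ 0 :=
    mul_ne_zero (mul_ne_zero two_ne_zero (Complex.ofReal_ne_zero.mpr Real.pi_ne_zero))
      Complex.I_ne_zero
  have hkC : (k : ℂ) ≠ 0 := by exact_mod_cast hk
  have hdiv : (e : ℂ) / k = t :=
    mul_right_cancel₀ h2pi (by rw [← ht]; ring)
  have het : (e : ℂ) = t * k := (div_eq_iff hkC).mp hdiv
  have hetZ : e = t * k := by exact_mod_cast het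
  -- conclude
  have hkk : k = (m : ℤ) * t * k := by
    conv_lhs => rw [hk_me, hetZ]
    ring
  have hmt : (m : ℤ) * t = 1 :=
    mul_right_cancel₀ hk (by linarith [hkk] : ((m : ℤ) * t) * k = 1 * k)
  have hm1 : (m : ℤ) = 1 := Int.eq_one_of_mul_eq_one_right (by positivity) hmt
  exact_mod_cast hm1
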